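/- In the game G₅: there exists a Nash equilibrium whose leader expected reward is 2, and 2 is the maximum of the leader's expected reward over all Nash equilibria; however, for every memory bound b ∈ ℕ, every Nash equilibrium with memory bound b gives the leader expected reward 0. Moreover, for every rational c > 0, in the game c·G₅ obtained from G₅ by multiplying all rewards by c, there is a Nash equilibrium with leader expected reward 2c while every bounded-memory Nash equilibrium gives the leader expected reward 0; hence the gap between the leader's optimal Nash payoff and her optimal payoff over bounded-memory Nash equilibria can be made arbitrarily large. -/

import Mathlib

open scoped BigOperators

/-- A multi-player discounted sum game (MDSG) on sets of players `P`,
vertices `V` and actions `A`, all required to be finite (`A` nonempty).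
The `owner` of a vertex chooses the action there; `tr` is the transition
function, `rew p v a` is the reward of player `p` for taking action `a`
at vertex `v`, `init` is the initial probability distribution on the
vertices, and `disc` is the discount factor. -/
structure MDSG (P V A : Type) : Type where
  fin_P : Finite P
  fin_V : Finite V
  fin_A : Finite A
  nonempty_A : Nonempty A
  owner : V → P
  tr : V → A → V
  rew : P → V → A → ℝ
  init : V → ℝ
  init_nonneg : ∀ v, 0 ≤ init v
  init_sum : ∑' v, init v = 1
  disc : ℝ
  disc_pos : 0 < disc
  disc_lt_one : disc < 1

/-- A pure strategy profile: given the history (the list of vertex/action pairs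
seen so far) and the current vertex, the owner of the current vertex chooses
an action.  The strategy of an individual player `p` is the restriction of the
profile to the vertices owned by `p`. -/
abbrev Profile (V A : Type) : Type := List (V × A) → V → A

namespace MDSG

variable {P V A : Type}

/-- The pair (history, current vertex) after `n` steps of the play of `σ` from `v`. -/
def histState (G : MDSG P V A) (σ : Profile V A) (v : V) : ℕ → List (V × A) × V
  | 0 => ([], v)
  | n + 1 =>
    let s := G.histState σ v n
    (s.1 ++ [(s.2, σ s.1 s.2)], G.tr s.2 (σ s.1 s.2))

/-- The vertex visited at step `n` of the play of `σ` from `v`. -/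
def playV (G : MDSG P V A) (σ : Profile V A) (v : V) (n : ℕ) : V :=
  (G.histState σ v n).2

/-- The action taken at step `n` of the play of `σ` from `v`. -/
def playA (G : MDSG P V A) (σ : Profile V A) (v : V) (n : ℕ) : A :=
  σ (G.histState σ v n).1 (G.playV σ v n)

/-- The discounted reward of player `p` on the play of `σ` from `v`. -/
noncomputable def reward (G : MDSG P V A) (p : P) (σ : Profile V A) (v : V) : ℝ :=
  ∑' i : ℕ, G.rew p (G.playV σ v i) (G.playA σ v i) * G.disc ^ i

/-- The expected reward of player `p` under the strategy profile `σ`. -/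
noncomputable def ER (G : MDSG P V A) (p : P) (σ : Profile V A) : ℝ :=
  ∑' v : V, G.init v * G.reward p σ v

/-- `σ'` differs from `σ` at most in the strategy of player `p`. -/
def DiffOnly (G : MDSG P V A) (σ σ' : Profile V A) (p : P) : Prop :=
  ∀ h v, G.owner v ≠ p → σ' h v = σ h v

/-- Nash equilibrium: no player can profit from a unilateral deviation. -/
def IsNash (G : MDSG P V A) (σ : Profile V A) : Prop :=
  ∀ p σ', G.DiffOnly σ σ' p → G.ER p σ' ≤ G.ER p σ

/-- Leader strategy profile: no player other than the leader `l` can profit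
from a unilateral deviation. -/
def IsLeaderSP (G : MDSG P V A) (l : P) (σ : Profile V A) : Prop :=
  ∀ p, p ≠ l → ∀ σ', G.DiffOnly σ σ' p → G.ER p σ' ≤ G.ER p σ

/-- `σ` is a (pure) strategy profile with memory bound `b`: there is a memory
set `M` with `|M| ≤ b`, an initial memory state, a memory update function and
a usage function producing all the actions of `σ`. -/
def MemBound (G : MDSG P V A) (σ : Profile V A) (b : ℕ) : Prop :=
  ∃ n : ℕ, n ≤ b ∧ ∃ (m₀ : Fin n) (μ : Fin n → V × A → Fin n) (u : Fin n → V → A),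
    ∀ h v, σ h v = u (h.foldl μ m₀) v

/-- `σ` is memoryless (positional): actions depend only on the current vertex. -/
def Positional (G : MDSG P V A) (σ : Profile V A) : Prop :=
  ∀ h h' v, σ h v = σ h' v

open Classical in
/-- Combination of a strategy for player `p` with a joint strategy of the other players. -/
noncomputable def combine (G : MDSG P V A) (p : P) (τp τo : Profile V A) : Profile V A :=
  fun h v => if G.owner v = p then τp h v else τo h v

/-- The lower value of player `p` at vertex `v`: the supremum over the pure
strategies of `p` of the infimum over the joint pure strategies of the other
players of the reward of `p` on the resulting play from `v`. -/
noncomputable def lowerValue (G : MDSG P V A) (p : P) (v : V) : ℝ :=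
  ⨆ τp : Profile V A, ⨅ τo : Profile V A, G.reward p (G.combine p τp τo) v

/-- The upper value of player `p` at vertex `v`. -/
noncomputable def upperValue (G : MDSG P V A) (p : P) (v : V) : ℝ :=
  ⨅ τo : Profile V A, ⨆ τp : Profile V A, G.reward p (G.combine p τp τo) v

/-- The history `h` contains a deviation from `σ` at position `i`. -/
def DeviatesAt (G : MDSG P V A) (σ : Profile V A) (h : List (V × A)) (i : ℕ) : Prop :=
  ∃ hi : i < h.length, (h.get ⟨i, hi⟩).2 ≠ σ (h.take i) (h.get ⟨i, hi⟩).1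

/-- Reward-and-punish profile: on every history that deviates from the
prescribed actions, every action depends only on the current vertex and on the
identity of the first player who deviated (all players follow a fixed
positional strategy depending only on the first deviator). -/
def IsRewardPunish (G : MDSG P V A) (σ : Profile V A) : Prop :=
  ∃ punish : P → V → A, ∀ (h : List (V × A)) (i : ℕ) (hi : i < h.length),
    G.DeviatesAt σ h i → (∀ j, j < i → ¬ G.DeviatesAt σ h j) →
    ∀ v, σ h v = punish (G.owner (h.get ⟨i, hi⟩).1) v

/-- The outcome plays of `σ` are generated with compliance memory bound `b`:
on every history on which all players have complied, the actions of `σ` are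
produced by a memory structure with at most `b` states. -/
def ComplianceMemBound (G : MDSG P V A) (σ : Profile V A) (b : ℕ) : Prop :=
  ∃ n : ℕ, n ≤ b ∧ ∃ (m₀ : Fin n) (μ : Fin n → V × A → Fin n) (u : Fin n → V → A),
    ∀ h : List (V × A), (∀ i, ¬ G.DeviatesAt σ h i) →
      ∀ v, σ h v = u (h.foldl μ m₀) v

/-- The set of stationary mixed decision vectors: an assignment of a
probability distribution over the actions to every vertex. -/
def simplexD (V A : Type) : Set (V → A → ℝ) :=
  {d | ∀ v, (∀ a, 0 ≤ d v a) ∧ ∑' a, d v a = 1}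

end MDSG
namespace MDSG

/-- The game `c·G₅` (Figure 6 of the paper, with all rewards scaled by `c`;
`G₅` itself is `G5 1`): three players `0` (player 1), `1` (player 2) and `2`
(the leader); five vertices `0, 1, 2, 3, 4` representing vertices 1, 2, 3 and
the sinks `s₁`, `s₂`; vertex `0` and sink `3` belong to player 1, vertex `1`
and sink `4` to player 2, and vertex `2` to the leader; actions `Bool`.
Vertex `0`: `true` moves to `1` with rewards `(0,0,0)`, `false` moves to the
sink `3` with rewards `(0,0,0)`.  Vertex `1`: `true` moves to `2` with rewards
`c·(-1,-1,1)`, `false` moves to the sink `4` with rewards `(0,0,0)`.  The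
sinks loop with rewards `(0,0,0)`.  Vertex `2` has two self-loops: `true` with
rewards `c·(1,0,1)` and `false` with rewards `c·(0,1,1)`.  Initial
distribution: point mass at `0`; discount factor `2/3`. -/
noncomputable def G5 (c : ℝ) : MDSG (Fin 3) (Fin 5) Bool where
  fin_P := inferInstance
  fin_V := inferInstance
  fin_A := inferInstance
  nonempty_A := inferInstance
  owner := ![0, 1, 2, 0, 1]
  tr := fun v a =>
    if v = 0 then (if a then 1 else 3)
    else if v = 1 then (if a then 2 else 4)
    else v
  rew := fun p v a =>
    c * (if v = 1 then (if a then (if p = 2 then 1 else -1) else 0)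
         else if v = 2 then
           (if p = 2 then 1
            else if p = 0 then (if a then 1 else 0)
            else (if a then 0 else 1))
         else 0)
  init := fun v => if v = 0 then 1 else 0
  init_nonneg := by intro v; (try dsimp only); split <;> norm_num
  init_sum := by simpa using tsum_ite_eq (0 : Fin 5) (1 : ℝ)
  disc := 2 / 3
  disc_pos := by norm_num
  disc_lt_one := by norm_num

end MDSG

section G5Aux
open MDSG

variable {c : ℝ} {σ : Profile (Fin 5) Bool}

lemma G5_tr (v : Fin 5) (a : Bool) : (G5 c).tr v a =
    if v = 0 then (if a then 1 else 3) else if v = 1 then (if a then 2 else 4) else v := rfl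

lemma G5_rew (p : Fin 3) (v : Fin 5) (a : Bool) : (G5 c).rew p v a =
    c * (if v = 1 then (if a then (if p = 2 then 1 else -1) else 0)
         else if v = 2 then
           (if p = 2 then 1
            else if p = 0 then (if a then 1 else 0)
            else (if a then 0 else 1))
         else 0) := rfl

lemma G5_owner (v : Fin 5) : (G5 c).owner v = ![0,1,2,0,1] v := rfl

lemma G5_disc : (G5 c).disc = 2/3 := rfl

lemma rew_v0 (p : Fin 3) (a : Bool) : (G5 c).rew p 0 a = 0 := by
  rw [G5_rew]; simp
lemma rew_v3 (p : Fin 3) (a : Bool) : (G5 c).rew p 3 a = 0 := by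
  rw [G5_rew]; simp
lemma rew_v4 (p : Fin 3) (a : Bool) : (G5 c).rew p 4 a = 0 := by
  rw [G5_rew]; simp
lemma rew_v1_false (p : Fin 3) : (G5 c).rew p 1 false = 0 := by
  rw [G5_rew]; simp
lemma rew_v1_true_2 : (G5 c).rew 2 1 true = c := by
  rw [G5_rew]; simp
lemma rew_v1_true_0 : (G5 c).rew 0 1 true = -c := by
  rw [G5_rew]; simp
lemma rew_v1_true_1 : (G5 c).rew 1 1 true = -c := by
  rw [G5_rew]; simp
lemma rew_v2_2 (a : Bool) : (G5 c).rew 2 2 a = c := by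
  rw [G5_rew]; simp
lemma rew_v2_0 (a : Bool) : (G5 c).rew 0 2 a = if a then c else 0 := by
  rw [G5_rew]; cases a <;> simp
lemma rew_v2_1 (a : Bool) : (G5 c).rew 1 2 a = if a then 0 else c := by
  rw [G5_rew]; cases a <;> simp

lemma playV_zero (w : Fin 5) : (G5 c).playV σ w 0 = w := rfl
lemma playA_zero (w : Fin 5) : (G5 c).playA σ w 0 = σ [] w := rfl
lemma playV_succ (w : Fin 5) (n : ℕ) :
    (G5 c).playV σ w (n+1) = (G5 c).tr ((G5 c).playV σ w n) ((G5 c).playA σ w n) := rfl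
lemma hist_succ (w : Fin 5) (n : ℕ) :
    ((G5 c).histState σ w (n+1)).1
      = ((G5 c).histState σ w n).1 ++ [(((G5 c).histState σ w n).2, (G5 c).playA σ w n)] := rfl
lemma hist_len (w : Fin 5) : ∀ n, (((G5 c).histState σ w n).1).length = n := by
  intro n
  induction n with
  | zero => rfl
  | succ n ih => rw [hist_succ]; simp [ih]

lemma playV_absorb {w u : Fin 5} (hu : u = 2 ∨ u = 3 ∨ u = 4) {i : ℕ}
    (hv : (G5 c).playV σ w i = u) : ∀ k, i ≤ k → (G5 c).playV σ w k = u := by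
  have htr : ∀ a, (G5 c).tr u a = u := by
    intro a; rw [G5_tr]; rcases hu with h | h | h <;> subst h <;> simp
  intro k hk
  obtain ⟨j, rfl⟩ := Nat.exists_eq_add_of_le hk
  induction j with
  | zero => simpa using hv
  | succ j ih => rw [← Nat.add_assoc, playV_succ, ih (by omega), htr]

end G5Aux
section G5Aux2
open MDSG

variable {c : ℝ} {σ : Profile (Fin 5) Bool}

lemma summable_geom23 : Summable (fun i : ℕ => ((2:ℝ)/3)^i) :=
  summable_geometric_of_lt_one (by norm_num) (by norm_num)

lemma summable_of_le_geom {f : ℕ → ℝ} {C : ℝ}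
    (h : ∀ i, |f i| ≤ C * ((2:ℝ)/3)^i) : Summable f := by
  refine Summable.of_norm_bounded (summable_geom23.mul_left C) ?_
  simpa using h

lemma abs_rew_le (p : Fin 3) (v : Fin 5) (a : Bool) : |(G5 c).rew p v a| ≤ |c| := by
  rw [G5_rew, abs_mul]
  have : |(if v = 1 then (if a then (if p = (2:Fin 3) then (1:ℝ) else -1) else 0)
         else if v = 2 then
           (if p = 2 then 1
            else if p = 0 then (if a then 1 else 0)
            else (if a then 0 else 1))
         else 0)| ≤ 1 := by
    split_ifs <;> norm_num
  nlinarith [abs_nonneg c]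

lemma summable_reward (p : Fin 3) (w : Fin 5) :
    Summable (fun i => (G5 c).rew p ((G5 c).playV σ w i) ((G5 c).playA σ w i) * (G5 c).disc ^ i) := by
  refine summable_of_le_geom (C := |c|) (fun i => ?_)
  rw [abs_mul, G5_disc]
  have h1 := abs_rew_le (c := c) p ((G5 c).playV σ w i) ((G5 c).playA σ w i)
  have h2 : |((2:ℝ)/3) ^ i| = ((2:ℝ)/3) ^ i := abs_of_nonneg (by positivity)
  rw [h2]
  have h3 : (0:ℝ) ≤ ((2:ℝ)/3)^i := by positivity
  nlinarith

lemma ER_eq (p : Fin 3) : (G5 c).ER p σ = (G5 c).reward p σ 0 := by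
  unfold MDSG.ER
  rw [tsum_eq_single (0 : Fin 5)]
  · show (if (0:Fin 5) = 0 then (1:ℝ) else 0) * _ = _
    simp
  · intro v hv
    show (if v = 0 then (1:ℝ) else 0) * _ = 0
    simp [hv]

lemma reward_eq_zero {p : Fin 3} {w : Fin 5}
    (h : ∀ i, (G5 c).rew p ((G5 c).playV σ w i) ((G5 c).playA σ w i) = 0) :
    (G5 c).reward p σ w = 0 := by
  unfold MDSG.reward
  have : ∀ i : ℕ, (G5 c).rew p ((G5 c).playV σ w i) ((G5 c).playA σ w i) * (G5 c).disc ^ i = 0 := by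
    intro i; rw [h i, zero_mul]
  rw [tsum_congr this, tsum_zero]

/-- Right case: the play complies and reaches vertex 2. -/
def RightCase (c : ℝ) (σ : Profile (Fin 5) Bool) : Prop :=
  (G5 c).playA σ 0 0 = true ∧ (G5 c).playA σ 0 1 = true ∧
  (G5 c).playV σ 0 1 = 1 ∧ ∀ i, 2 ≤ i → (G5 c).playV σ 0 i = 2

lemma trichotomy (c : ℝ) (σ : Profile (Fin 5) Bool) :
    (∀ p i, (G5 c).rew p ((G5 c).playV σ 0 i) ((G5 c).playA σ 0 i) = 0) ∨ RightCase c σ := by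
  by_cases h0 : (G5 c).playA σ 0 0 = true
  · have hv1 : (G5 c).playV σ 0 1 = if (G5 c).playA σ 0 0 then 1 else 3 := by
      rw [playV_succ, playV_zero, G5_tr]; simp
    rw [h0, if_pos rfl] at hv1
    by_cases h1 : (G5 c).playA σ 0 1 = true
    · refine Or.inr ⟨h0, h1, hv1, ?_⟩
      have hv2 : (G5 c).playV σ 0 2 = 2 := by
        rw [playV_succ, hv1, h1, G5_tr]; simp
      exact fun i hi => playV_absorb (Or.inl rfl) hv2 i hi
    · left
      have h1' : (G5 c).playA σ 0 1 = false := by simpa using h1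
      have hv2 : (G5 c).playV σ 0 2 = 4 := by
        rw [playV_succ, hv1, h1', G5_tr]; simp
      have habs := playV_absorb (c := c) (σ := σ) (Or.inr (Or.inr rfl)) hv2
      intro p i
      match i, habs with
      | 0, _ => rw [playV_zero]; exact rew_v0 p _
      | 1, _ => rw [hv1, h1']; exact rew_v1_false p
      | (k+2), habs => rw [habs (k+2) (by omega)]; exact rew_v4 p _
  · left
    have h0' : (G5 c).playA σ 0 0 = false := by simpa using h0
    have hv1 : (G5 c).playV σ 0 1 = 3 := by
      rw [playV_succ, playV_zero, h0', G5_tr]; simp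
    have habs := playV_absorb (c := c) (σ := σ) (Or.inr (Or.inl rfl)) hv1
    intro p i
    match i, habs with
    | 0, _ => rw [playV_zero]; exact rew_v0 p _
    | (k+1), habs => rw [habs (k+1) (by omega)]; exact rew_v3 p _

end G5Aux2
section G5Aux3
open MDSG

variable {c : ℝ} {σ : Profile (Fin 5) Bool}

noncomputable def xv (c : ℝ) (σ : Profile (Fin 5) Bool) : ℝ :=
  ∑' j : ℕ, (if (G5 c).playA σ 0 (j+2) then ((2:ℝ)/3)^j else 0)

noncomputable def yv (c : ℝ) (σ : Profile (Fin 5) Bool) : ℝ :=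
  ∑' j : ℕ, (if (G5 c).playA σ 0 (j+2) then 0 else ((2:ℝ)/3)^j)

lemma summable_ite_geom (b : ℕ → Bool) (C D : ℝ) :
    Summable (fun j : ℕ => if b j then C * ((2:ℝ)/3)^j else D * ((2:ℝ)/3)^j) := by
  refine summable_of_le_geom (C := max |C| |D|) (fun i => ?_)
  have h3 : (0:ℝ) ≤ ((2:ℝ)/3)^i := by positivity
  split_ifs
  · rw [abs_mul, abs_of_nonneg h3]
    exact mul_le_mul_of_nonneg_right (le_max_left _ _) h3
  · rw [abs_mul, abs_of_nonneg h3]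
    exact mul_le_mul_of_nonneg_right (le_max_right _ _) h3

lemma summable_xv0 (b : ℕ → Bool) :
    Summable (fun j : ℕ => if b j then ((2:ℝ)/3)^j else 0) := by
  have := summable_ite_geom b 1 0
  simpa using this

lemma summable_yv0 (b : ℕ → Bool) :
    Summable (fun j : ℕ => if b j then 0 else ((2:ℝ)/3)^j) := by
  have := summable_ite_geom b 0 1
  simpa using this

lemma tsum_geom23 : (∑' j : ℕ, ((2:ℝ)/3)^j) = 3 := by
  rw [tsum_geometric_of_lt_one (by norm_num) (by norm_num)]; norm_num

lemma xv_add_yv : xv c σ + yv c σ = 3 := by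
  unfold xv yv
  rw [← Summable.tsum_add (summable_xv0 _) (summable_yv0 _)]
  have : ∀ j : ℕ, ((if (G5 c).playA σ 0 (j+2) then ((2:ℝ)/3)^j else 0)
      + (if (G5 c).playA σ 0 (j+2) then 0 else ((2:ℝ)/3)^j)) = ((2:ℝ)/3)^j := by
    intro j; split_ifs <;> ring
  rw [tsum_congr this, tsum_geom23]

lemma reward2_eq (hR : RightCase c σ) : (G5 c).reward 2 σ 0 = 2 * c := by
  unfold MDSG.reward
  have hterm : ∀ i : ℕ, (G5 c).rew 2 ((G5 c).playV σ 0 i) ((G5 c).playA σ 0 i) * (G5 c).disc ^ i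
      = (if i = 0 then 0 else c * ((2:ℝ)/3)^i) := by
    intro i
    match i with
    | 0 => rw [playV_zero, rew_v0]; simp
    | 1 => rw [hR.2.2.1, hR.2.1, rew_v1_true_2, G5_disc]; simp
    | (k+2) => rw [hR.2.2.2 (k+2) (by omega), rew_v2_2, G5_disc]; simp
  rw [tsum_congr hterm]
  have hs : Summable (fun i : ℕ => if i = 0 then (0:ℝ) else c * ((2:ℝ)/3)^i) := by
    refine summable_of_le_geom (C := |c|) (fun i => ?_)
    have h3 : (0:ℝ) ≤ ((2:ℝ)/3)^i := by positivity
    split_ifs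
    · simpa using mul_nonneg (abs_nonneg c) h3
    · rw [abs_mul, abs_of_nonneg h3]
  rw [Summable.tsum_eq_zero_add hs, if_pos rfl]
  have h1 : ∀ i : ℕ, (if i + 1 = 0 then (0:ℝ) else c * ((2:ℝ)/3)^(i+1))
      = (c * (2/3)) * ((2:ℝ)/3)^i := by
    intro i; rw [if_neg (Nat.succ_ne_zero i)]; ring
  rw [tsum_congr h1, tsum_mul_left, tsum_geom23]
  ring

lemma reward0_eq (hR : RightCase c σ) :
    (G5 c).reward 0 σ 0 = c * (-(2/3) + (2/3)^2 * xv c σ) := by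
  unfold MDSG.reward
  set f : ℕ → ℝ := fun i => (G5 c).rew 0 ((G5 c).playV σ 0 i) ((G5 c).playA σ 0 i) * (G5 c).disc ^ i with hf
  have hsf : Summable f := summable_reward 0 0
  have hsf1 : Summable (fun i => f (i+1)) := (summable_nat_add_iff 1).2 hsf
  rw [Summable.tsum_eq_zero_add hsf, Summable.tsum_eq_zero_add hsf1]
  have h0 : f 0 = 0 := by rw [hf]; simp only; rw [playV_zero, rew_v0, zero_mul]
  have h1 : f 1 = -c * (2/3) := by
    rw [hf]; simp only; rw [hR.2.2.1, hR.2.1, rew_v1_true_0, G5_disc]; ring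
  have h2 : ∀ i : ℕ, f (i+1+1) = (c * (2/3)^2) * (if (G5 c).playA σ 0 (i+2) then ((2:ℝ)/3)^i else 0) := by
    intro i
    rw [hf]; simp only
    rw [show i+1+1 = i+2 from rfl, hR.2.2.2 (i+2) (by omega), rew_v2_0, G5_disc]
    split_ifs <;> ring
  rw [h0, h1, tsum_congr h2, tsum_mul_left]
  show 0 + (-c * (2/3) + c * (2/3)^2 * xv c σ) = _
  ring

lemma reward1_eq (hR : RightCase c σ) :
    (G5 c).reward 1 σ 0 = c * (-(2/3) + (2/3)^2 * yv c σ) := by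
  unfold MDSG.reward
  set f : ℕ → ℝ := fun i => (G5 c).rew 1 ((G5 c).playV σ 0 i) ((G5 c).playA σ 0 i) * (G5 c).disc ^ i with hf
  have hsf : Summable f := summable_reward 1 0
  have hsf1 : Summable (fun i => f (i+1)) := (summable_nat_add_iff 1).2 hsf
  rw [Summable.tsum_eq_zero_add hsf, Summable.tsum_eq_zero_add hsf1]
  have h0 : f 0 = 0 := by rw [hf]; simp only; rw [playV_zero, rew_v0, zero_mul]
  have h1 : f 1 = -c * (2/3) := by
    rw [hf]; simp only; rw [hR.2.2.1, hR.2.1, rew_v1_true_1, G5_disc]; ring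
  have h2 : ∀ i : ℕ, f (i+1+1) = (c * (2/3)^2) * (if (G5 c).playA σ 0 (i+2) then 0 else ((2:ℝ)/3)^i) := by
    intro i
    rw [hf]; simp only
    rw [show i+1+1 = i+2 from rfl, hR.2.2.2 (i+2) (by omega), rew_v2_1, G5_disc]
    split_ifs <;> ring
  rw [h0, h1, tsum_congr h2, tsum_mul_left]
  show 0 + (-c * (2/3) + c * (2/3)^2 * yv c σ) = _
  ring

end G5Aux3
section G5Aux4
open MDSG

variable {c : ℝ} {σ : Profile (Fin 5) Bool}

lemma histState_congr (σ σ' : Profile (Fin 5) Bool) (w : Fin 5) :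
    ∀ n, (∀ k, k < n → σ' ((G5 c).histState σ w k).1 ((G5 c).histState σ w k).2
            = σ ((G5 c).histState σ w k).1 ((G5 c).histState σ w k).2) →
      (G5 c).histState σ' w n = (G5 c).histState σ w n := by
  intro n
  induction n with
  | zero => intro _; rfl
  | succ n ih =>
    intro H
    have hn := ih (fun k hk => H k (Nat.lt_succ_of_lt hk))
    show (((G5 c).histState σ' w n).1 ++ [(((G5 c).histState σ' w n).2,
        σ' ((G5 c).histState σ' w n).1 ((G5 c).histState σ' w n).2)],
        (G5 c).tr ((G5 c).histState σ' w n).2 (σ' ((G5 c).histState σ' w n).1 ((G5 c).histState σ' w n).2)) = _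
    rw [hn, H n (Nat.lt_succ_self n)]
    rfl

lemma reward_congr (σ σ' : Profile (Fin 5) Bool) (w : Fin 5) (p : Fin 3)
    (H : ∀ k, σ' ((G5 c).histState σ w k).1 ((G5 c).histState σ w k).2
            = σ ((G5 c).histState σ w k).1 ((G5 c).histState σ w k).2) :
    (G5 c).reward p σ' w = (G5 c).reward p σ w := by
  have h : ∀ n, (G5 c).histState σ' w n = (G5 c).histState σ w n :=
    fun n => histState_congr σ σ' w n (fun k _ => H k)
  unfold MDSG.reward MDSG.playA MDSG.playV
  refine tsum_congr (fun i => ?_)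
  rw [h i, H i]

lemma dev0_le (hc : 0 < c) (hN : (G5 c).IsNash σ) (hR : RightCase c σ) :
    (3:ℝ)/2 ≤ xv c σ := by
  classical
  set σ' : Profile (Fin 5) Bool := fun h v => if v = 0 then false else σ h v with hσ'
  have hdiff : (G5 c).DiffOnly σ σ' 0 := by
    intro h v hv
    have hv0 : v ≠ 0 := by rintro rfl; exact hv rfl
    simp [hσ', hv0]
  have hplay0 : (G5 c).playA σ' 0 0 = false := by
    rw [playA_zero]; simp [hσ']
  have hv1 : (G5 c).playV σ' 0 1 = 3 := by
    rw [playV_succ, playV_zero, hplay0, G5_tr]; simp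
  have habs := playV_absorb (c := c) (σ := σ') (Or.inr (Or.inl rfl)) hv1
  have hz : (G5 c).reward 0 σ' 0 = 0 := by
    refine reward_eq_zero (fun i => ?_)
    match i with
    | 0 => rw [playV_zero]; exact rew_v0 _ _
    | (k+1) => rw [habs (k+1) (by omega)]; exact rew_v3 _ _
  have hle := hN 0 σ' hdiff
  rw [ER_eq, ER_eq, hz, reward0_eq hR] at hle
  nlinarith [hle]

lemma dev1_ge (hc : 0 < c) (hN : (G5 c).IsNash σ) (hR : RightCase c σ) :
    xv c σ ≤ 3/2 := by
  classical
  set σ' : Profile (Fin 5) Bool := fun h v => if v = 1 then false else σ h v with hσ'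
  have hdiff : (G5 c).DiffOnly σ σ' 1 := by
    intro h v hv
    have hv0 : v ≠ 1 := by rintro rfl; exact hv rfl
    simp [hσ', hv0]
  have hplay0 : (G5 c).playA σ' 0 0 = true := by
    rw [playA_zero]
    have h1 := hR.1
    rw [playA_zero] at h1
    simpa [hσ'] using h1
  have hv1 : (G5 c).playV σ' 0 1 = 1 := by
    rw [playV_succ, playV_zero, hplay0, G5_tr]; simp
  have hplay1 : (G5 c).playA σ' 0 1 = false := by
    show σ' ((G5 c).histState σ' 0 1).1 ((G5 c).playV σ' 0 1) = false
    rw [hv1]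
    simp [hσ']
  have hv2 : (G5 c).playV σ' 0 2 = 4 := by
    rw [playV_succ, hv1, hplay1, G5_tr]; simp
  have habs := playV_absorb (c := c) (σ := σ') (Or.inr (Or.inr rfl)) hv2
  have hz : (G5 c).reward 1 σ' 0 = 0 := by
    refine reward_eq_zero (fun i => ?_)
    match i with
    | 0 => rw [playV_zero]; exact rew_v0 _ _
    | 1 => rw [hv1, hplay1]; exact rew_v1_false _
    | (k+2) => rw [habs (k+2) (by omega)]; exact rew_v4 _ _
  have hle := hN 1 σ' hdiff
  rw [ER_eq, ER_eq, hz, reward1_eq hR] at hle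
  have hxy := xv_add_yv (c := c) (σ := σ)
  nlinarith [hle]

lemma nash_x (hc : 0 < c) (hN : (G5 c).IsNash σ) (hR : RightCase c σ) :
    xv c σ = 3/2 :=
  le_antisymm (dev1_ge hc hN hR) (dev0_le hc hN hR)

end G5Aux4
section G5Aux5
open MDSG

/-- Greedy remainder sequence for representing `3/2` in powers of `2/3`. -/
def rq : ℕ → ℚ
  | 0 => 3/2
  | j+1 => if (2/3:ℚ)^j ≤ rq j then rq j - (2/3)^j else rq j

/-- The greedy digit sequence. -/
def bb (j : ℕ) : Bool := decide ((2/3:ℚ)^j ≤ rq j)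

lemma rq_bounds : ∀ j, 0 ≤ rq j ∧ rq j ≤ 3 * (2/3:ℚ)^j := by
  intro j
  induction j with
  | zero => norm_num [rq]
  | succ j ih =>
    have hp : (0:ℚ) < (2/3:ℚ)^j := by positivity
    have hps : ((2:ℚ)/3)^(j+1) = (2/3:ℚ)^j * (2/3) := pow_succ _ _
    show 0 ≤ rq (j+1) ∧ _
    rw [show rq (j+1) = if (2/3:ℚ)^j ≤ rq j then rq j - (2/3)^j else rq j from rfl]
    split_ifs with h
    · constructor
      · linarith
      · rw [hps]; linarith [ih.2]
    · constructor
      · exact ih.1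
      · rw [hps]; linarith [le_of_not_ge h]

lemma rq_partial : ∀ N, (∑ j ∈ Finset.range N, (if bb j then ((2:ℚ)/3)^j else 0)) = 3/2 - rq N := by
  intro N
  induction N with
  | zero => norm_num [rq]
  | succ N ih =>
    rw [Finset.sum_range_succ, ih]
    rw [show rq (N+1) = if (2/3:ℚ)^N ≤ rq N then rq N - (2/3)^N else rq N from rfl]
    by_cases h : (2/3:ℚ)^N ≤ rq N
    · rw [if_pos h, if_pos (by simpa [bb] using h)]; ring
    · rw [if_neg h, if_neg (by simpa [bb] using h)]; ring

lemma bb_tsum : (∑' j : ℕ, (if bb j then ((2:ℝ)/3)^j else 0)) = 3/2 := by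
  have hs := summable_xv0 bb
  have h1 : Filter.Tendsto (fun N => ∑ j ∈ Finset.range N, (if bb j then ((2:ℝ)/3)^j else 0))
      Filter.atTop (nhds (∑' j : ℕ, (if bb j then ((2:ℝ)/3)^j else 0))) :=
    hs.hasSum.tendsto_sum_nat
  have hcast : ∀ N, (∑ j ∈ Finset.range N, (if bb j then ((2:ℝ)/3)^j else 0))
      = 3/2 - ((rq N : ℚ) : ℝ) := by
    intro N
    have hq := rq_partial N
    have hcc : ((3/2 - rq N : ℚ) : ℝ) = 3/2 - ((rq N : ℚ) : ℝ) := by push_cast; ring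
    rw [← hq] at hcc
    rw [← hcc]
    push_cast
    refine Finset.sum_congr rfl (fun j _ => ?_)
    split_ifs <;> norm_num
  have hrq : Filter.Tendsto (fun N => ((rq N : ℚ) : ℝ)) Filter.atTop (nhds 0) := by
    have hb : ∀ N, ((rq N : ℚ) : ℝ) ≤ 3 * ((2:ℝ)/3)^N := by
      intro N
      have h := (rq_bounds N).2
      calc ((rq N : ℚ) : ℝ) ≤ ((3 * (2/3:ℚ)^N : ℚ) : ℝ) := by exact_mod_cast h
        _ = 3 * ((2:ℝ)/3)^N := by push_cast; ring
    have hb0 : ∀ N, (0:ℝ) ≤ ((rq N : ℚ) : ℝ) := by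
      intro N; exact_mod_cast (rq_bounds N).1
    have hgeo : Filter.Tendsto (fun N : ℕ => 3 * ((2:ℝ)/3)^N) Filter.atTop (nhds 0) := by
      have := tendsto_pow_atTop_nhds_zero_of_lt_one (r := (2:ℝ)/3) (by norm_num) (by norm_num)
      simpa using this.const_mul 3
    exact squeeze_zero hb0 hb hgeo
  have h2 : Filter.Tendsto (fun N => ∑ j ∈ Finset.range N, (if bb j then ((2:ℝ)/3)^j else 0))
      Filter.atTop (nhds (3/2)) := by
    simp only [hcast]
    simpa using (tendsto_const_nhds (x := (3:ℝ)/2)).sub hrq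
  exact tendsto_nhds_unique h1 h2

/-- The optimal (infinite-memory) Nash profile. -/
def sigmaStar : Profile (Fin 5) Bool := fun h v => if v = 2 then bb (h.length - 2) else true

lemma sigmaStar_right (c : ℝ) : RightCase c sigmaStar := by
  have h0 : (G5 c).playA sigmaStar 0 0 = true := by
    rw [playA_zero]; simp [sigmaStar]
  have hv1 : (G5 c).playV sigmaStar 0 1 = 1 := by
    rw [playV_succ, playV_zero, h0, G5_tr]; simp
  have h1 : (G5 c).playA sigmaStar 0 1 = true := by
    show sigmaStar ((G5 c).histState sigmaStar 0 1).1 ((G5 c).playV sigmaStar 0 1) = true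
    rw [hv1]; simp [sigmaStar]
  have hv2 : (G5 c).playV sigmaStar 0 2 = 2 := by
    rw [playV_succ, hv1, h1, G5_tr]; simp
  exact ⟨h0, h1, hv1, fun i hi => playV_absorb (Or.inl rfl) hv2 i hi⟩

lemma sigmaStar_playA (c : ℝ) (j : ℕ) : (G5 c).playA sigmaStar 0 (j+2) = bb j := by
  show sigmaStar ((G5 c).histState sigmaStar 0 (j+2)).1 ((G5 c).playV sigmaStar 0 (j+2)) = bb j
  rw [(sigmaStar_right c).2.2.2 (j+2) (by omega)]
  simp [sigmaStar, hist_len]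

lemma sigmaStar_xv (c : ℝ) : xv c sigmaStar = 3/2 := by
  unfold xv
  rw [← bb_tsum]
  exact tsum_congr (fun j => by rw [sigmaStar_playA])

end G5Aux5
section G5Aux6
open MDSG

variable {c : ℝ}

lemma fin3_cases (p : Fin 3) : p = 0 ∨ p = 1 ∨ p = 2 := by fin_cases p <;> simp

lemma sigmaStar_ER2 (c : ℝ) : (G5 c).ER 2 sigmaStar = 2 * c := by
  rw [ER_eq, reward2_eq (sigmaStar_right c)]

lemma sigmaStar_ER0 (c : ℝ) : (G5 c).ER 0 sigmaStar = 0 := by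
  rw [ER_eq, reward0_eq (sigmaStar_right c), sigmaStar_xv]; ring

lemma sigmaStar_ER1 (c : ℝ) : (G5 c).ER 1 sigmaStar = 0 := by
  rw [ER_eq, reward1_eq (sigmaStar_right c)]
  have h := xv_add_yv (c := c) (σ := sigmaStar)
  rw [sigmaStar_xv] at h
  have : yv c sigmaStar = 3/2 := by linarith
  rw [this]; ring

lemma sigmaStar_nash (hc : 0 < c) : (G5 c).IsNash sigmaStar := by
  intro p σ' hdiff
  rcases trichotomy c σ' with hL | hR'
  · have hz : (G5 c).ER p σ' = 0 := by rw [ER_eq]; exact reward_eq_zero (hL p)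
    rw [hz]
    rcases fin3_cases p with rfl | rfl | rfl
    · rw [sigmaStar_ER0]
    · rw [sigmaStar_ER1]
    · rw [sigmaStar_ER2]; positivity
  · have hv0 : ((G5 c).histState sigmaStar 0 0).2 = (0 : Fin 5) := rfl
    have hv1 : ((G5 c).histState sigmaStar 0 1).2 = (1 : Fin 5) := (sigmaStar_right c).2.2.1
    have hv2 : ∀ k : ℕ, ((G5 c).histState sigmaStar 0 (k+2)).2 = (2 : Fin 5) :=
      fun k => (sigmaStar_right c).2.2.2 (k+2) (by omega)
    rcases fin3_cases p with rfl | rfl | rfl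
    · have H : ∀ k, σ' ((G5 c).histState sigmaStar 0 k).1 ((G5 c).histState sigmaStar 0 k).2
          = sigmaStar ((G5 c).histState sigmaStar 0 k).1 ((G5 c).histState sigmaStar 0 k).2 := by
        intro k
        match k with
        | 0 =>
          show σ' [] 0 = sigmaStar [] 0
          have h1 : σ' [] 0 = true := hR'.1
          rw [h1]; simp [sigmaStar]
        | 1 => rw [hv1]; exact hdiff _ _ (by rw [G5_owner]; decide)
        | (k+2) => rw [hv2 k]; exact hdiff _ _ (by rw [G5_owner]; decide)
      rw [ER_eq, ER_eq, reward_congr sigmaStar σ' 0 _ H]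
    · have H : ∀ k, σ' ((G5 c).histState sigmaStar 0 k).1 ((G5 c).histState sigmaStar 0 k).2
          = sigmaStar ((G5 c).histState sigmaStar 0 k).1 ((G5 c).histState sigmaStar 0 k).2 := by
        have H0 : σ' ((G5 c).histState sigmaStar 0 0).1 ((G5 c).histState sigmaStar 0 0).2
            = sigmaStar ((G5 c).histState sigmaStar 0 0).1 ((G5 c).histState sigmaStar 0 0).2 := by
          rw [hv0]; exact hdiff _ _ (by rw [G5_owner]; decide)
        intro k
        match k with
        | 0 => exact H0
        | 1 =>
          have he : (G5 c).histState σ' 0 1 = (G5 c).histState sigmaStar 0 1 :=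
            histState_congr sigmaStar σ' 0 1 (fun k hk => by
              interval_cases k
              exact H0)
          have h1 : σ' ((G5 c).histState σ' 0 1).1 ((G5 c).histState σ' 0 1).2 = true := hR'.2.1
          rw [he, hv1] at h1
          rw [hv1, h1]
          simp [sigmaStar]
        | (k+2) => rw [hv2 k]; exact hdiff _ _ (by rw [G5_owner]; decide)
      rw [ER_eq, ER_eq, reward_congr sigmaStar σ' 0 _ H]
    · rw [ER_eq, ER_eq, reward2_eq hR', reward2_eq (sigmaStar_right c)]

lemma exists_nash (hc : 0 < c) :
    ∃ σ : Profile (Fin 5) Bool, (G5 c).IsNash σ ∧ (G5 c).ER 2 σ = 2 * c :=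
  ⟨sigmaStar, sigmaStar_nash hc, sigmaStar_ER2 c⟩

lemma ER2_le (σ : Profile (Fin 5) Bool) (hc : 0 ≤ c) : (G5 c).ER 2 σ ≤ 2 * c := by
  rcases trichotomy c σ with hL | hR
  · rw [ER_eq, reward_eq_zero (hL 2)]; positivity
  · rw [ER_eq, reward2_eq hR]

end G5Aux6
section G5Aux7
open MDSG

/-- An eventually periodic `0/1` sequence of powers of `2/3` cannot sum to `3/2`:
`2`-adic obstruction made elementary. -/
lemma not_periodic_sum (b : ℕ → Bool) (N p : ℕ) (hp : 0 < p)
    (hper : ∀ j, N ≤ j → b (j + p) = b j) :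
    (∑' j : ℕ, (if b j then ((2:ℝ)/3)^j else 0)) ≠ 3/2 := by
  intro hx
  set f : ℕ → ℝ := fun j => if b j then ((2:ℝ)/3)^j else 0 with hf
  have hs : Summable f := summable_xv0 b
  set F : ℝ := ∑ j ∈ Finset.range N, f j with hF
  set T : ℝ := ∑' j, f (j + N) with hT
  have hFT : F + T = 3/2 := by rw [hF, hT, Summable.sum_add_tsum_nat_add N hs]; exact hx
  -- tail self-similarity
  have hsN : Summable (fun j => f (j + N)) := (summable_nat_add_iff N).2 hs
  set Q : ℝ := ∑ r ∈ Finset.range p, f (r + N) with hQ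
  have hTQ : T = Q + ((2:ℝ)/3)^p * T := by
    have h1 : Q + (∑' j, f (j + p + N)) = T := by
      rw [hT, hQ]
      have := Summable.sum_add_tsum_nat_add (f := fun j => f (j + N)) p hsN
      simpa using this
    have h2x : ∀ j : ℕ, f (j + p + N) = ((2:ℝ)/3)^p * f (j + N) := by
      intro j
      rw [hf]
      simp only
      have hb : b (j + p + N) = b (j + N) := by
        have := hper (j + N) (by omega)
        rw [show j + N + p = j + p + N by omega] at this
        exact this
      rw [hb]
      split_ifs
      · rw [show j + p + N = p + (j + N) by omega, pow_add]
      · ring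
    have h3 : (∑' j, f (j + p + N)) = ((2:ℝ)/3)^p * T := by
      rw [tsum_congr h2x, tsum_mul_left, hT]
    linarith [h1, h3]
  -- the key real identity with integer ingredients
  set FZ : ℤ := ∑ j ∈ Finset.range N, (if b j then 2^j * 3^(N + p - 1 - j) else 0) with hFZ
  set QZ : ℤ := ∑ r ∈ Finset.range p, (if b (r + N) then 2^(r + N) * 3^(p - 1 - r) else 0) with hQZ
  have hFr : (3:ℝ)^(N + p - 1) * F = (FZ : ℤ) := by
    rw [hF, hFZ, Finset.mul_sum]
    push_cast
    refine Finset.sum_congr rfl (fun j hj => ?_)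
    have hjN : j < N := Finset.mem_range.1 hj
    rw [hf]
    simp only
    split_ifs
    · have he : (3:ℝ)^(N + p - 1 - j) * 3^j = 3^(N + p - 1) := by
        rw [← pow_add]
        congr 1
        omega
      have h3 : ((3:ℝ)^j) ≠ 0 := by positivity
      field_simp
      rw [← he]
      simp only [div_pow]; field_simp
    · ring
  have hQr : (3:ℝ)^(N + p - 1) * Q = (QZ : ℤ) := by
    rw [hQ, hQZ, Finset.mul_sum]
    push_cast
    refine Finset.sum_congr rfl (fun r hr => ?_)
    have hrp : r < p := Finset.mem_range.1 hr
    rw [hf]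
    simp only
    split_ifs
    · have he : (3:ℝ)^(p - 1 - r) * 3^(r + N) = 3^(N + p - 1) := by
        rw [← pow_add]
        congr 1
        omega
      have h3 : ((3:ℝ)^(r + N)) ≠ 0 := by positivity
      field_simp
      rw [← he]
      simp only [div_pow]; field_simp
    · ring
  -- derive (3^(N+p) - 2*FZ) * (3^p - 2^p) = 2 * 3^p * QZ over ℝ
  have hT2 : T = 3/2 - F := by linarith
  have hkey : ((3:ℝ)^(N + p) - 2 * FZ) * ((3:ℝ)^p - 2^p) = 2 * 3^p * QZ := by
    have e0 : (3/2 - F) * (1 - ((2:ℝ)/3)^p) = Q := by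
      linear_combination hTQ - (1 - ((2:ℝ)/3)^p) * hT2
    have h3p : ((3:ℝ)^p) ≠ 0 := by positivity
    have e2 : ((2:ℝ)/3)^p * 3^p = 2^p := by
      rw [div_pow]
      field_simp
    have e3 : (3:ℝ)^(N + p) = 3^(N + p - 1) * 3 := by
      rw [← pow_succ]
      congr 1
      omega
    have e1 : (3 - 2*F) * ((3:ℝ)^p - 2^p) = 2 * 3^p * Q := by
      linear_combination (2*(3:ℝ)^p) * e0 + (3 - 2*F) * e2
    calc ((3:ℝ)^(N + p) - 2 * FZ) * ((3:ℝ)^p - 2^p)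
        = ((3:ℝ)^(N+p-1) * (3 - 2*F)) * ((3:ℝ)^p - 2^p) := by rw [← hFr, e3]; ring
      _ = (3:ℝ)^(N+p-1) * ((3 - 2*F) * ((3:ℝ)^p - 2^p)) := by ring
      _ = (3:ℝ)^(N+p-1) * (2 * 3^p * Q) := by rw [e1]
      _ = 2 * 3^p * ((3:ℝ)^(N+p-1) * Q) := by ring
      _ = 2 * 3^p * QZ := by rw [hQr]
  -- cast down to ℤ and get a parity contradiction
  have hkeyZ : ((3:ℤ)^(N + p) - 2 * FZ) * ((3:ℤ)^p - 2^p) = 2 * 3^p * QZ := by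
    exact_mod_cast hkey
  have hodd : Odd (((3:ℤ)^(N + p) - 2 * FZ) * ((3:ℤ)^p - 2^p)) := by
    have o1 : Odd ((3:ℤ)^(N + p)) := Odd.pow (by decide)
    have o2 : Odd ((3:ℤ)^p) := Odd.pow (by decide)
    have e1 : Even ((2:ℤ) * FZ) := even_two_mul FZ
    have e2 : Even ((2:ℤ)^p) := by
      have hpe : (2:ℤ)^p = 2 * 2^(p-1) := by
        rw [← pow_succ']
        congr 1
        omega
      rw [hpe]
      exact even_two_mul _
    exact (o1.sub_even e1).mul (o2.sub_even e2)
  have heven : Even (((3:ℤ)^(N + p) - 2 * FZ) * ((3:ℤ)^p - 2^p)) := by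
    rw [hkeyZ]
    exact ⟨3^p * QZ, by ring⟩
  exact (Int.not_odd_iff_even.2 heven) hodd

end G5Aux7
section G5Aux8
open MDSG

variable {c : ℝ}

lemma bounded_nash_zero (hc : 0 < c) (b : ℕ) (σ : Profile (Fin 5) Bool)
    (hmb : (G5 c).MemBound σ b) (hN : (G5 c).IsNash σ) : (G5 c).ER 2 σ = 0 := by
  rcases trichotomy c σ with hL | hR
  · rw [ER_eq]; exact reward_eq_zero (hL 2)
  · exfalso
    obtain ⟨n, hnb, m₀, μ, u, hu⟩ := hmb
    set m : ℕ → Fin n := fun i => ((G5 c).histState σ 0 i).1.foldl μ m₀ with hm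
    have ha : ∀ i, (G5 c).playA σ 0 i = u (m i) ((G5 c).playV σ 0 i) := by
      intro i
      show σ _ _ = _
      rw [hu]
    have hmsucc : ∀ i, m (i+1) = μ (m i) (((G5 c).histState σ 0 i).2, (G5 c).playA σ 0 i) := by
      intro i
      rw [hm]
      simp only
      rw [hist_succ, List.foldl_append]
      rfl
    set g : Fin n → Fin n := fun s => μ s (2, u s 2) with hg
    have hiter : ∀ k, m (2 + k) = g^[k] (m 2) := by
      intro k
      induction k with
      | zero => rfl
      | succ k ih =>
        have hv : ((G5 c).histState σ 0 (2+k)).2 = (2 : Fin 5) := hR.2.2.2 (2+k) (by omega)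
        have hak : (G5 c).playA σ 0 (2+k) = u (g^[k] (m 2)) 2 := by
          have := ha (2+k)
          rw [show (G5 c).playV σ 0 (2+k) = ((G5 c).histState σ 0 (2+k)).2 from rfl, hv, ih] at this
          exact this
        rw [show 2 + (k+1) = (2 + k) + 1 by omega, hmsucc, ih, hv, hak,
          Function.iterate_succ_apply']
    have hninj : ¬ Function.Injective (fun k : Fin (n+1) => g^[(k:ℕ)] (m 2)) := by
      intro hinj
      have h1 := Fintype.card_le_of_injective _ hinj
      simp only [Fintype.card_fin] at h1
      omega
    obtain ⟨k0, l0, heq0, hne0⟩ := Function.not_injective_iff.1 hninj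
    have hmain : ∃ (k l : ℕ), k < l ∧ g^[k] (m 2) = g^[l] (m 2) := by
      rcases Nat.lt_or_ge (k0 : ℕ) (l0 : ℕ) with h | h
      · exact ⟨k0, l0, h, heq0⟩
      · have : (l0 : ℕ) < (k0 : ℕ) := by
          rcases Nat.lt_or_ge (l0 : ℕ) (k0 : ℕ) with h' | h'
          · exact h'
          · exact absurd (Fin.ext (by omega)) hne0
        exact ⟨l0, k0, this, heq0.symm⟩
    obtain ⟨k, l, hkl, heq⟩ := hmain
    have hperA : ∀ j, k ≤ j →
        (G5 c).playA σ 0 (j + (l - k) + 2) = (G5 c).playA σ 0 (j + 2) := by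
      intro j hj
      have h1 : g^[j + (l - k)] (m 2) = g^[j] (m 2) := by
        have e1 : j + (l - k) = (j - k) + l := by omega
        have e2 : j = (j - k) + k := by omega
        rw [e1, Function.iterate_add_apply, ← heq, ← Function.iterate_add_apply, ← e2]
      have hform : ∀ i : ℕ, (G5 c).playA σ 0 (i + 2) = u (g^[i] (m 2)) 2 := by
        intro i
        have hv : ((G5 c).histState σ 0 (i+2)).2 = (2 : Fin 5) := hR.2.2.2 (i+2) (by omega)
        have := ha (i+2)
        rw [show (G5 c).playV σ 0 (i+2) = ((G5 c).histState σ 0 (i+2)).2 from rfl, hv] at this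
        rw [this, show i + 2 = 2 + i by omega, hiter]
      rw [hform j, hform (j + (l - k)), h1]
    have hx := nash_x hc hN hR
    have hcontra := not_periodic_sum (fun j => (G5 c).playA σ 0 (j+2)) k (l - k) (by omega)
      (fun j hj => hperA j hj)
    exact hcontra hx

end G5Aux8


open MDSG in
/-- In the game `G₅` (leader = player `2`): there is a Nash equilibrium whose
leader expected reward is `2`, and `2` is the maximum of the leader's expected
reward over all Nash equilibria; however, for every memory bound `b`, every
Nash equilibrium with memory bound `b` gives the leader expected reward `0`.
Moreover, for every rational `c > 0`, in the scaled game `c·G₅` there is a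
Nash equilibrium with leader expected reward `2c` while every bounded-memory
Nash equilibrium gives the leader expected reward `0`; hence the gap between
the leader's optimal Nash payoff and her optimal payoff over bounded-memory
Nash equilibria can be made arbitrarily large. -/
theorem optimal_Nash_needs_infinite_memory :
    (∃ σ : Profile (Fin 5) Bool, (G5 1).IsNash σ ∧ (G5 1).ER 2 σ = 2) ∧
    (∀ σ : Profile (Fin 5) Bool, (G5 1).IsNash σ → (G5 1).ER 2 σ ≤ 2) ∧
    (∀ (b : ℕ) (σ : Profile (Fin 5) Bool),
      (G5 1).MemBound σ b → (G5 1).IsNash σ → (G5 1).ER 2 σ = 0) ∧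
    (∀ c : ℚ, 0 < c →
      (∃ σ : Profile (Fin 5) Bool,
        (G5 (c : ℝ)).IsNash σ ∧ (G5 (c : ℝ)).ER 2 σ = 2 * (c : ℝ)) ∧
      (∀ (b : ℕ) (σ : Profile (Fin 5) Bool),
        (G5 (c : ℝ)).MemBound σ b → (G5 (c : ℝ)).IsNash σ →
        (G5 (c : ℝ)).ER 2 σ = 0)) := by
  
  refine ⟨?_, ?_, ?_, ?_⟩
  · obtain ⟨σ, h1, h2⟩ := exists_nash (c := 1) one_pos
    exact ⟨σ, h1, by rw [h2]; norm_num⟩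
  · intro σ hN
    have := ER2_le (c := 1) σ (by norm_num)
    linarith
  · intro b σ hmb hN
    exact bounded_nash_zero one_pos b σ hmb hN
  · intro c hc
    have hc' : (0:ℝ) < (c:ℝ) := by exact_mod_cast hc
    obtain ⟨σ, h1, h2⟩ := exists_nash hc'
    exact ⟨⟨σ, h1, h2⟩, fun b σ hmb hN => bounded_nash_zero hc' b σ hmb hN⟩
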